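/- arXiv:2207.10987 — 2 statements merged into one kernel-verified Lean document; each statement's English description precedes it below -/
import Mathlib

section
/- Let c ≥ 0 be a real number and define W : ℝ → ℂ by W(Y) := −∫_{−∞}^0 e^{ξ³/3 + cξ + iYξ} dξ. Then W is a smooth bounded function and satisfies the inhomogeneous Airy-type equation W''(Y) − c W(Y) − i Y W(Y) = 1 for every Y ∈ ℝ. Equivalently, the tempered distribution with Fourier transform Ŵ(ξ) = −√(2π) e^{ξ³/3 + cξ} 1_{(−∞,0]}(ξ) solves ∂_Y²W − cW − iYW = 1. -/
open MeasureTheory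

/-- `W(Y) = −∫_{−∞}^0 e^{ξ³/3 + cξ + iYξ} dξ`. -/
noncomputable def airyW (c : ℝ) (Y : ℝ) : ℂ :=
  -∫ ξ in Set.Iic (0 : ℝ),
      Complex.exp ((ξ : ℂ) ^ 3 / 3 + (c : ℂ) * ξ + Complex.I * Y * ξ)

open Set Filter Topology

/-- `E n Y = ∫_{−∞}^0 (iξ)^n e^{ξ³/3 + cξ + iYξ} dξ`. -/
noncomputable def airyE (c : ℝ) (n : ℕ) (Y : ℝ) : ℂ :=
  ∫ ξ in Set.Iic (0 : ℝ),
    (Complex.I * ξ) ^ n * Complex.exp ((ξ : ℂ) ^ 3 / 3 + (c : ℂ) * ξ + Complex.I * Y * ξ)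

lemma airy_norm (c Y : ℝ) (n : ℕ) (ξ : ℝ) :
    ‖(Complex.I * (ξ : ℂ)) ^ n *
        Complex.exp ((ξ : ℂ) ^ 3 / 3 + (c : ℂ) * ξ + Complex.I * Y * ξ)‖
      = |ξ| ^ n * Real.exp (ξ ^ 3 / 3 + c * ξ) := by
  have h : ((ξ : ℂ) ^ 3 / 3 + (c : ℂ) * ξ + Complex.I * Y * ξ)
      = ((ξ ^ 3 / 3 + c * ξ : ℝ) : ℂ) + ((Y * ξ : ℝ) : ℂ) * Complex.I := by
    push_cast; ring
  have hre : ((ξ : ℂ) ^ 3 / 3 + (c : ℂ) * ξ + Complex.I * Y * ξ).re = ξ ^ 3 / 3 + c * ξ := by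
    rw [h, Complex.add_re, Complex.ofReal_re, Complex.mul_I_re]
    simp
  have hIξ : ‖Complex.I * (ξ : ℂ)‖ = |ξ| := by simp
  rw [norm_mul, norm_pow, hIξ, Complex.norm_exp, hre]

lemma airy_bound (c : ℝ) (hc : 0 ≤ c) (n : ℕ) {ξ : ℝ} (hξ : ξ ≤ 0) :
    |ξ| ^ n * Real.exp (ξ ^ 3 / 3 + c * ξ)
      ≤ ((n.factorial : ℝ) * Real.exp 2) * Real.exp ξ := by
  have h1 : |ξ| ^ n ≤ (n.factorial : ℝ) * Real.exp (-ξ) := by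
    have h := Real.pow_div_factorial_le_exp |ξ| (abs_nonneg ξ) n
    rw [div_le_iff₀ (by positivity)] at h
    rw [abs_of_nonpos hξ] at h
    rw [abs_of_nonpos hξ]
    linarith [h]
  have h2 : Real.exp (ξ ^ 3 / 3 + c * ξ) ≤ Real.exp (2 + 2 * ξ) := by
    apply Real.exp_le_exp.2
    have hcξ : c * ξ ≤ 0 := mul_nonpos_of_nonneg_of_nonpos hc hξ
    nlinarith [sq_nonneg (ξ + 1.4), sq_nonneg (ξ + 3),
      mul_nonneg (neg_nonneg.2 hξ) (sq_nonneg (ξ + 1.4))]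
  calc |ξ| ^ n * Real.exp (ξ ^ 3 / 3 + c * ξ)
      ≤ ((n.factorial : ℝ) * Real.exp (-ξ)) * Real.exp (2 + 2 * ξ) :=
        mul_le_mul h1 h2 (Real.exp_pos _).le (by positivity)
    _ = ((n.factorial : ℝ) * Real.exp 2) * Real.exp ξ := by
        rw [mul_assoc, ← Real.exp_add, show -ξ + (2 + 2 * ξ) = 2 + ξ by ring,
          Real.exp_add, ← mul_assoc]

lemma airy_cont (c Y : ℝ) (n : ℕ) :
    Continuous (fun ξ : ℝ => (Complex.I * (ξ : ℂ)) ^ n *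
      Complex.exp ((ξ : ℂ) ^ 3 / 3 + (c : ℂ) * ξ + Complex.I * Y * ξ)) := by
  fun_prop

lemma airy_integrableOn (c : ℝ) (hc : 0 ≤ c) (Y : ℝ) (n : ℕ) :
    IntegrableOn (fun ξ : ℝ => (Complex.I * (ξ : ℂ)) ^ n *
      Complex.exp ((ξ : ℂ) ^ 3 / 3 + (c : ℂ) * ξ + Complex.I * Y * ξ)) (Set.Iic 0) := by
  apply Integrable.mono'
    ((integrableOn_exp_Iic 0).const_mul ((n.factorial : ℝ) * Real.exp 2))
    (airy_cont c Y n).aestronglyMeasurable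
  filter_upwards [ae_restrict_mem measurableSet_Iic] with ξ hξ
  rw [airy_norm]
  exact airy_bound c hc n hξ

lemma airyE_hasDerivAt (c : ℝ) (hc : 0 ≤ c) (n : ℕ) (Y : ℝ) :
    HasDerivAt (airyE c n) (airyE c (n + 1) Y) Y := by
  have key := hasDerivAt_integral_of_dominated_loc_of_deriv_le
    (μ := volume.restrict (Set.Iic (0 : ℝ)))
    (F := fun (Y : ℝ) (ξ : ℝ) => (Complex.I * (ξ : ℂ)) ^ n *
      Complex.exp ((ξ : ℂ) ^ 3 / 3 + (c : ℂ) * ξ + Complex.I * Y * ξ))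
    (F' := fun (Y : ℝ) (ξ : ℝ) => (Complex.I * (ξ : ℂ)) ^ (n + 1) *
      Complex.exp ((ξ : ℂ) ^ 3 / 3 + (c : ℂ) * ξ + Complex.I * Y * ξ))
    (x₀ := Y)
    (bound := fun ξ => (((n + 1).factorial : ℝ) * Real.exp 2) * Real.exp ξ)
    (Metric.ball_mem_nhds Y one_pos)
    (Eventually.of_forall fun Y' => (airy_cont c Y' n).aestronglyMeasurable)
    (airy_integrableOn c hc Y n)
    ((airy_cont c Y (n + 1)).aestronglyMeasurable)
    ?_ ((integrableOn_exp_Iic 0).const_mul _) ?_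
  · exact key.2
  · filter_upwards [ae_restrict_mem measurableSet_Iic] with ξ hξ
    intro Y' _
    rw [airy_norm]
    exact airy_bound c hc (n + 1) hξ
  · apply Eventually.of_forall
    intro ξ Y' _
    have h0 : HasDerivAt (fun w : ℂ =>
        (ξ : ℂ) ^ 3 / 3 + (c : ℂ) * ξ + Complex.I * w * ξ) (Complex.I * ξ) (Y' : ℂ) := by
      simpa using
        ((((hasDerivAt_id ((Y' : ℂ))).const_mul Complex.I).mul_const
          ((ξ : ℂ))).const_add ((ξ : ℂ) ^ 3 / 3 + (c : ℂ) * ξ))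
    have h1 := (h0.cexp.const_mul ((Complex.I * (ξ : ℂ)) ^ n)).comp_ofReal
    refine h1.congr_deriv ?_
    rw [pow_succ]
    ring

lemma airyE_contDiff (c : ℝ) (hc : 0 ≤ c) : ∀ (m : ℕ) (n : ℕ), ContDiff ℝ m (airyE c n) := by
  intro m
  induction m with
  | zero =>
    intro n
    rw [Nat.cast_zero, contDiff_zero]
    exact continuous_iff_continuousAt.2 fun Y =>
      (airyE_hasDerivAt c hc n Y).differentiableAt.continuousAt
  | succ m ih =>
    intro n
    rw [show ((m + 1 : ℕ) : WithTop ℕ∞) = (m : WithTop ℕ∞) + 1 by push_cast; ring,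
      contDiff_succ_iff_deriv]
    refine ⟨fun Y => (airyE_hasDerivAt c hc n Y).differentiableAt, ?_, ?_⟩
    · intro h
      simp at h
    · have hd : deriv (airyE c n) = airyE c (n + 1) :=
        funext fun Y => (airyE_hasDerivAt c hc n Y).deriv
      rw [hd]
      exact ih (n + 1)

lemma airy_tendsto (c : ℝ) (hc : 0 ≤ c) (Y : ℝ) :
    Tendsto (fun ξ : ℝ =>
        Complex.exp ((ξ : ℂ) ^ 3 / 3 + (c : ℂ) * ξ + Complex.I * Y * ξ)) atBot (𝓝 0) := by
  rw [tendsto_zero_iff_norm_tendsto_zero]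
  apply squeeze_zero' (Eventually.of_forall fun ξ => norm_nonneg _)
    (g := fun ξ : ℝ => Real.exp (2 + 2 * ξ))
  · filter_upwards [Iic_mem_atBot (0 : ℝ)] with ξ hξ
    have h := airy_norm c Y 0 ξ
    simp only [pow_zero, one_mul] at h
    rw [h]
    apply Real.exp_le_exp.2
    have hcξ : c * ξ ≤ 0 := mul_nonpos_of_nonneg_of_nonpos hc hξ
    nlinarith [sq_nonneg (ξ + 1.4), sq_nonneg (ξ + 3),
      mul_nonneg (neg_nonneg.2 hξ) (sq_nonneg (ξ + 1.4))]
  · apply Real.tendsto_exp_atBot.comp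
    apply tendsto_atBot_add_const_left
    exact (tendsto_id.const_mul_atBot two_pos)

lemma airy_key (c : ℝ) (hc : 0 ≤ c) (Y : ℝ) :
    ∫ ξ in Set.Iic (0 : ℝ), ((ξ : ℂ) ^ 2 + (c : ℂ) + Complex.I * Y) *
      Complex.exp ((ξ : ℂ) ^ 3 / 3 + (c : ℂ) * ξ + Complex.I * Y * ξ) = 1 := by
  have hderiv : ∀ ξ ∈ Set.Iic (0 : ℝ),
      HasDerivAt (fun ξ : ℝ =>
          Complex.exp ((ξ : ℂ) ^ 3 / 3 + (c : ℂ) * ξ + Complex.I * Y * ξ))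
        (((ξ : ℂ) ^ 2 + (c : ℂ) + Complex.I * Y) *
          Complex.exp ((ξ : ℂ) ^ 3 / 3 + (c : ℂ) * ξ + Complex.I * Y * ξ)) ξ := by
    intro ξ _
    have h0 : HasDerivAt (fun w : ℂ => w ^ 3 / 3 + (c : ℂ) * w + Complex.I * Y * w)
        ((ξ : ℂ) ^ 2 + (c : ℂ) + Complex.I * Y) (ξ : ℂ) := by
      have h1 := (hasDerivAt_pow 3 ((ξ : ℂ))).div_const 3
      have h2 := (hasDerivAt_id ((ξ : ℂ))).const_mul ((c : ℂ))
      have h3 := (hasDerivAt_id ((ξ : ℂ))).const_mul (Complex.I * (Y : ℂ))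
      exact ((h1.add h2).add h3).congr_deriv (by push_cast; ring)
    have h4 := h0.cexp.comp_ofReal
    convert h4 using 1
    ring
  have hint : IntegrableOn (fun ξ : ℝ => ((ξ : ℂ) ^ 2 + (c : ℂ) + Complex.I * Y) *
      Complex.exp ((ξ : ℂ) ^ 3 / 3 + (c : ℂ) * ξ + Complex.I * Y * ξ)) (Set.Iic 0) := by
    have hsplit : (fun ξ : ℝ => ((ξ : ℂ) ^ 2 + (c : ℂ) + Complex.I * Y) *
        Complex.exp ((ξ : ℂ) ^ 3 / 3 + (c : ℂ) * ξ + Complex.I * Y * ξ))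
        = fun ξ : ℝ => -((Complex.I * (ξ : ℂ)) ^ 2 *
            Complex.exp ((ξ : ℂ) ^ 3 / 3 + (c : ℂ) * ξ + Complex.I * Y * ξ))
          + ((c : ℂ) * ((Complex.I * (ξ : ℂ)) ^ 0 *
              Complex.exp ((ξ : ℂ) ^ 3 / 3 + (c : ℂ) * ξ + Complex.I * Y * ξ))
            + (Complex.I * (Y : ℂ)) * ((Complex.I * (ξ : ℂ)) ^ 0 *
              Complex.exp ((ξ : ℂ) ^ 3 / 3 + (c : ℂ) * ξ + Complex.I * Y * ξ))) := by
      funext ξ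
      have hI : (Complex.I * (ξ : ℂ)) ^ 2 = -((ξ : ℂ) ^ 2) := by
        rw [mul_pow, Complex.I_sq]; ring
      rw [hI]
      ring
    rw [hsplit]
    exact (airy_integrableOn c hc Y 2).neg.add
      (((airy_integrableOn c hc Y 0).const_mul _).add
        ((airy_integrableOn c hc Y 0).const_mul _))
  have h5 := integral_Iic_of_hasDerivAt_of_tendsto'
    (f := fun ξ : ℝ => Complex.exp ((ξ : ℂ) ^ 3 / 3 + (c : ℂ) * ξ + Complex.I * Y * ξ))
    (f' := fun ξ : ℝ => ((ξ : ℂ) ^ 2 + (c : ℂ) + Complex.I * Y) *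
      Complex.exp ((ξ : ℂ) ^ 3 / 3 + (c : ℂ) * ξ + Complex.I * Y * ξ))
    (a := 0) hderiv hint (airy_tendsto c hc Y)
  rw [h5]
  norm_num

/-- `W` is a smooth bounded function solving `W'' − cW − iYW = 1`. -/
theorem airyW_solves (c : ℝ) (hc : 0 ≤ c) :
    ContDiff ℝ (⊤ : ℕ∞) (airyW c) ∧
    (∃ M : ℝ, ∀ Y : ℝ, ‖airyW c Y‖ ≤ M) ∧
    ∀ Y : ℝ,
      deriv (deriv (airyW c)) Y - (c : ℂ) * airyW c Y - Complex.I * Y * airyW c Y = 1 := by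
  have hW : airyW c = fun Y => -(airyE c 0 Y) := by
    funext Y
    simp [airyW, airyE]
  have hW1 : ∀ Y, HasDerivAt (airyW c) (-(airyE c 1 Y)) Y := by
    intro Y
    rw [hW]
    exact (airyE_hasDerivAt c hc 0 Y).neg
  have hd1 : deriv (airyW c) = fun Y => -(airyE c 1 Y) := funext fun Y => (hW1 Y).deriv
  have hd2 : ∀ Y, deriv (deriv (airyW c)) Y = -(airyE c 2 Y) := by
    intro Y
    rw [hd1]
    exact ((airyE_hasDerivAt c hc 1 Y).neg).deriv
  refine ⟨?_, ?_, ?_⟩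
  · rw [hW]
    exact (contDiff_infty.2 fun n => airyE_contDiff c hc n 0).neg
  · refine ⟨∫ ξ in Set.Iic (0 : ℝ), ((Nat.factorial 0 : ℝ) * Real.exp 2) * Real.exp ξ,
      fun Y => ?_⟩
    simp only [hW, norm_neg]
    apply norm_integral_le_of_norm_le ((integrableOn_exp_Iic 0).const_mul _)
    filter_upwards [ae_restrict_mem measurableSet_Iic] with ξ hξ
    rw [airy_norm]
    exact airy_bound c hc 0 hξ
  · intro Y
    have h2 : airyE c 2 Y = -∫ ξ in Set.Iic (0 : ℝ), (ξ : ℂ) ^ 2 *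
        Complex.exp ((ξ : ℂ) ^ 3 / 3 + (c : ℂ) * ξ + Complex.I * Y * ξ) := by
      have hfun : (fun ξ : ℝ => (Complex.I * (ξ : ℂ)) ^ 2 *
          Complex.exp ((ξ : ℂ) ^ 3 / 3 + (c : ℂ) * ξ + Complex.I * Y * ξ))
          = fun ξ : ℝ => -((ξ : ℂ) ^ 2 *
            Complex.exp ((ξ : ℂ) ^ 3 / 3 + (c : ℂ) * ξ + Complex.I * Y * ξ)) := by
        funext ξ
        rw [mul_pow, Complex.I_sq]
        ring
      rw [airyE, hfun, integral_neg]
    have h0 : airyE c 0 Y = ∫ ξ in Set.Iic (0 : ℝ),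
        Complex.exp ((ξ : ℂ) ^ 3 / 3 + (c : ℂ) * ξ + Complex.I * Y * ξ) := by
      simp [airyE]
    have key := airy_key c hc Y
    have int2 : IntegrableOn (fun ξ : ℝ => (ξ : ℂ) ^ 2 *
        Complex.exp ((ξ : ℂ) ^ 3 / 3 + (c : ℂ) * ξ + Complex.I * Y * ξ)) (Set.Iic 0) := by
      have h := (airy_integrableOn c hc Y 2).neg
      apply h.congr
      apply Eventually.of_forall
      intro ξ
      show -((Complex.I * (ξ : ℂ)) ^ 2 * _) = _
      rw [mul_pow, Complex.I_sq]
      ring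
    have int0 : IntegrableOn (fun ξ : ℝ =>
        Complex.exp ((ξ : ℂ) ^ 3 / 3 + (c : ℂ) * ξ + Complex.I * Y * ξ)) (Set.Iic 0) := by
      have h := airy_integrableOn c hc Y 0
      simpa using h
    have hsplit : (fun ξ : ℝ => ((ξ : ℂ) ^ 2 + (c : ℂ) + Complex.I * Y) *
        Complex.exp ((ξ : ℂ) ^ 3 / 3 + (c : ℂ) * ξ + Complex.I * Y * ξ))
        = fun ξ : ℝ => ((ξ : ℂ) ^ 2 *
            Complex.exp ((ξ : ℂ) ^ 3 / 3 + (c : ℂ) * ξ + Complex.I * Y * ξ))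
          + (((c : ℂ) * Complex.exp ((ξ : ℂ) ^ 3 / 3 + (c : ℂ) * ξ + Complex.I * Y * ξ))
            + ((Complex.I * (Y : ℂ)) *
              Complex.exp ((ξ : ℂ) ^ 3 / 3 + (c : ℂ) * ξ + Complex.I * Y * ξ))) := by
      funext ξ; ring
    have intc : IntegrableOn (fun ξ : ℝ => (c : ℂ) *
        Complex.exp ((ξ : ℂ) ^ 3 / 3 + (c : ℂ) * ξ + Complex.I * Y * ξ)) (Set.Iic 0) :=
      int0.const_mul _
    have inty : IntegrableOn (fun ξ : ℝ => (Complex.I * (Y : ℂ)) *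
        Complex.exp ((ξ : ℂ) ^ 3 / 3 + (c : ℂ) * ξ + Complex.I * Y * ξ)) (Set.Iic 0) :=
      int0.const_mul _
    have intcy : IntegrableOn (fun ξ : ℝ => (c : ℂ) *
        Complex.exp ((ξ : ℂ) ^ 3 / 3 + (c : ℂ) * ξ + Complex.I * Y * ξ)
        + (Complex.I * (Y : ℂ)) *
        Complex.exp ((ξ : ℂ) ^ 3 / 3 + (c : ℂ) * ξ + Complex.I * Y * ξ)) (Set.Iic 0) :=
      intc.add inty
    rw [hsplit] at key
    rw [integral_add int2 intcy, integral_add intc inty,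
      integral_const_mul, integral_const_mul] at key
    rw [hd2 Y]
    simp only [hW]
    rw [h2, h0]
    linear_combination key
end

section
/- There exists a constant C0 ∈ (1,∞) such that for all integers N ≥ 1 and m ≥ 1, all k ∈ ℤ∖{0}, and all ξ ∈ ℝ, the N-th derivative in ξ of the symbol ⟨k,ξ⟩^{m/2} satisfies |∂_ξ^N ⟨k,ξ⟩^{m/2}| ≤ C0^N ⟨k,ξ⟩^{m/2 − N} · ℘(m/2, N) · N!, where ℘(a,N) := ∏_{j=1}^N ⟨a − j − 1⟩. -/
open scoped BigOperators

/-- Japanese bracket `⟨a⟩ = (1+a²)^{1/2}`. -/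
noncomputable def jap (a : ℝ) : ℝ := Real.sqrt (1 + a ^ 2)

/-- Japanese bracket `⟨a,b⟩ = (1+a²+b²)^{1/2}`. -/
noncomputable def jap2 (a b : ℝ) : ℝ := Real.sqrt (1 + a ^ 2 + b ^ 2)

/-- `℘(a,N) = ∏_{j=1}^N ⟨a − j − 1⟩`. -/
noncomputable def wp (a : ℝ) (N : ℕ) : ℝ := ∏ j ∈ Finset.Icc 1 N, jap (a - j - 1)

/-- Coefficients of `∂^N (c+x²)^α = ∑ᵢ Csym α N i · x^(N-2i) (c+x²)^(α-N+i)`. -/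
noncomputable def Csym (α : ℝ) : ℕ → ℕ → ℝ
  | 0, 0 => 1
  | 0, _ + 1 => 0
  | N + 1, i =>
      2 * (α - N + i) * Csym α N i
        + ((N - 2 * (i - 1) : ℕ) : ℝ) * (if i = 0 then 0 else Csym α N (i - 1))

lemma Csym_support (α : ℝ) : ∀ N i, Csym α N i ≠ 0 → 2 * i ≤ N := by
  intro N
  induction N with
  | zero =>
    intro i h
    match i with
    | 0 => simp
    | i + 1 => simp [Csym] at h
  | succ N ih =>
    intro i h
    by_contra hlt
    push_neg at hlt
    have h1 : Csym α N i = 0 := by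
      by_contra h'; exact absurd (ih i h') (by omega)
    have h2 : ((N - 2 * (i - 1) : ℕ) : ℝ) = 0 := by norm_cast; omega
    rw [Csym, h1, h2] at h
    simp at h

lemma hasDerivAt_term (c : ℝ) (hc : 1 ≤ c) (q : ℝ) (p : ℕ) (x : ℝ) :
    HasDerivAt (fun x : ℝ => x ^ p * (c + x ^ 2) ^ q)
      ((p : ℝ) * x ^ (p - 1) * (c + x ^ 2) ^ q
        + (2 * q) * x ^ (p + 1) * (c + x ^ 2) ^ (q - 1)) x := by
  have hpos : 0 < c + x ^ 2 := by nlinarith [sq_nonneg x]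
  have h1 : HasDerivAt (fun x : ℝ => x ^ p) ((p : ℝ) * x ^ (p - 1)) x := hasDerivAt_pow p x
  have h2 : HasDerivAt (fun x : ℝ => c + x ^ 2) (2 * x) x := by
    simpa using ((hasDerivAt_pow 2 x).const_add c)
  have h3 := h2.rpow_const (p := q) (Or.inl hpos.ne')
  have h4 := h1.fun_mul h3
  exact h4.congr_deriv (by ring)

lemma Csym_formula (α c : ℝ) (hc : 1 ≤ c) (N : ℕ) :
    iteratedDeriv N (fun x : ℝ => (c + x ^ 2) ^ α)
      = fun ξ : ℝ => ∑ i ∈ Finset.range (N + 1),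
          Csym α N i * (ξ ^ (N - 2 * i) * (c + ξ ^ 2) ^ (α - N + i)) := by
  induction N with
  | zero =>
    funext ξ
    simp [Csym, iteratedDeriv_zero]
  | succ N ih =>
    rw [iteratedDeriv_succ, ih]
    funext ξ
    have hD : HasDerivAt (fun x : ℝ => ∑ i ∈ Finset.range (N + 1),
        Csym α N i * (x ^ (N - 2 * i) * (c + x ^ 2) ^ (α - (N : ℝ) + (i : ℝ))))
        (∑ i ∈ Finset.range (N + 1), Csym α N i *
          (((N - 2*i : ℕ) : ℝ) * ξ ^ (N - 2*i - 1) * (c + ξ ^ 2) ^ (α - (N : ℝ) + (i : ℝ))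
            + (2 * (α - (N : ℝ) + (i : ℝ))) * ξ ^ (N - 2*i + 1)
                * (c + ξ ^ 2) ^ (α - (N : ℝ) + (i : ℝ) - 1))) ξ := by
      apply HasDerivAt.fun_sum
      intro i _
      exact (hasDerivAt_term c hc _ _ ξ).const_mul _
    rw [hD.deriv]
    have e1 : ∀ i ∈ Finset.range (N + 2),
        Csym α (N + 1) i * (ξ ^ (N + 1 - 2 * i) * (c + ξ ^ 2) ^ (α - ((N : ℕ) + 1 : ℕ) + (i : ℝ)))
        = (2 * (α - (N : ℝ) + (i : ℝ)) * Csym α N i)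
              * (ξ ^ (N + 1 - 2 * i) * (c + ξ ^ 2) ^ (α - ((N : ℕ) + 1 : ℕ) + (i : ℝ)))
          + (((N - 2 * (i - 1) : ℕ) : ℝ) * (if i = 0 then 0 else Csym α N (i - 1)))
              * (ξ ^ (N + 1 - 2 * i) * (c + ξ ^ 2) ^ (α - ((N : ℕ) + 1 : ℕ) + (i : ℝ))) := by
      intro i _
      rw [Csym]
      ring
    rw [Finset.sum_congr rfl e1, Finset.sum_add_distrib]
    have hA : ∑ i ∈ Finset.range (N + 2),
        (2 * (α - (N : ℝ) + (i : ℝ)) * Csym α N i)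
          * (ξ ^ (N + 1 - 2 * i) * (c + ξ ^ 2) ^ (α - ((N : ℕ) + 1 : ℕ) + (i : ℝ)))
        = ∑ i ∈ Finset.range (N + 1), Csym α N i *
            ((2 * (α - (N : ℝ) + (i : ℝ))) * ξ ^ (N - 2*i + 1)
              * (c + ξ ^ 2) ^ (α - (N : ℝ) + (i : ℝ) - 1)) := by
      rw [Finset.sum_range_succ]
      have hz : Csym α N (N + 1) = 0 := by
        by_contra h; exact absurd (Csym_support α N (N + 1) h) (by omega)
      rw [hz]
      simp only [mul_zero, zero_mul, add_zero]
      apply Finset.sum_congr rfl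
      intro i hi
      rcases eq_or_ne (Csym α N i) 0 with h0 | h0
      · simp [h0]
      · have h2i : 2 * i ≤ N := Csym_support α N i h0
        have hexp : N + 1 - 2 * i = N - 2 * i + 1 := by omega
        have hexp2 : α - ((N : ℕ) + 1 : ℕ) + (i : ℝ) = α - (N : ℝ) + (i : ℝ) - 1 := by
          push_cast; ring
        rw [hexp, hexp2]; ring
    have hB : ∑ i ∈ Finset.range (N + 2),
        (((N - 2 * (i - 1) : ℕ) : ℝ) * (if i = 0 then 0 else Csym α N (i - 1)))
          * (ξ ^ (N + 1 - 2 * i) * (c + ξ ^ 2) ^ (α - ((N : ℕ) + 1 : ℕ) + (i : ℝ)))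
        = ∑ i ∈ Finset.range (N + 1), Csym α N i *
            (((N - 2*i : ℕ) : ℝ) * ξ ^ (N - 2*i - 1) * (c + ξ ^ 2) ^ (α - (N : ℝ) + (i : ℝ))) := by
      rw [Finset.sum_range_succ']
      have hite : ∀ x : ℕ, (if x + 1 = 0 then (0:ℝ) else Csym α N x) = Csym α N x :=
        fun x => if_neg (Nat.succ_ne_zero x)
      simp only [hite, if_pos rfl, ite_true, if_true, mul_zero, zero_mul, add_zero,
        Nat.add_sub_cancel]
      apply Finset.sum_congr rfl
      intro i hi
      have hexp : N + 1 - 2 * (i + 1) = N - 2 * i - 1 := by omega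
      have hexp2 : α - ((N : ℕ) + 1 : ℕ) + ((i : ℕ) + 1 : ℕ) = α - (N : ℝ) + (i : ℝ) := by
        push_cast; ring
      rw [hexp, hexp2]
      ring
    rw [hA, hB, ← Finset.sum_add_distrib]
    apply Finset.sum_congr rfl
    intro i _
    ring

lemma one_le_jap (a : ℝ) : 1 ≤ jap a := by
  have := Real.sqrt_le_sqrt (show (1:ℝ) ≤ 1 + a ^ 2 by nlinarith [sq_nonneg a])
  simpa [jap] using this

lemma abs_le_jap (a : ℝ) : |a| ≤ jap a := by
  rw [← Real.sqrt_sq_eq_abs]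
  exact Real.sqrt_le_sqrt (by nlinarith)

lemma wp_nonneg (a : ℝ) (N : ℕ) : 0 ≤ wp a N :=
  Finset.prod_nonneg fun _ _ => Real.sqrt_nonneg _

lemma wp_succ (a : ℝ) (N : ℕ) : wp a (N + 1) = wp a N * jap (a - (N + 1 : ℕ) - 1) :=
  Finset.prod_Icc_succ_top (by omega) _

lemma Csym_bound (α : ℝ) (N : ℕ) :
    ∑ i ∈ Finset.range (N + 1), |Csym α N i|
      ≤ 8 ^ N * wp (2 * α) N * N.factorial := by
  induction N with
  | zero => simp [Csym, wp]
  | succ N ih =>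
    set S := ∑ i ∈ Finset.range (N + 1), |Csym α N i| with hS
    have hS0 : 0 ≤ S := Finset.sum_nonneg fun i _ => abs_nonneg _
    set J := jap (2 * α - (N : ℝ) - 2) with hJdef
    have hJ1 : (1 : ℝ) ≤ J := one_le_jap _
    have hj := abs_le.mp (abs_le_jap (2 * α - (N : ℝ) - 2))
    have habs : ∀ i : ℕ, i ≤ N → |2 * (α - (N : ℝ) + (i : ℝ))| ≤ J + 3 * N + 2 := by
      intro i hi
      have hiN : (i : ℝ) ≤ (N : ℝ) := Nat.cast_le.mpr hi
      have hi0 : (0 : ℝ) ≤ (i : ℝ) := Nat.cast_nonneg i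
      rw [abs_le]
      exact ⟨by linarith [hj.1, hj.2], by linarith [hj.1, hj.2]⟩
    have hzero : Csym α N (N + 1) = 0 := by
      by_contra h; exact absurd (Csym_support α N (N + 1) h) (by omega)
    have step1 : ∑ i ∈ Finset.range (N + 2), |Csym α (N + 1) i|
        ≤ ∑ i ∈ Finset.range (N + 2), |2 * (α - (N : ℝ) + (i : ℝ))| * |Csym α N i|
          + ∑ i ∈ Finset.range (N + 2),
              ((N - 2 * (i - 1) : ℕ) : ℝ) * |if i = 0 then 0 else Csym α N (i - 1)| := by
      rw [← Finset.sum_add_distrib]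
      apply Finset.sum_le_sum
      intro i _
      rw [Csym]
      refine le_trans (abs_add_le _ _) (le_of_eq ?_)
      rw [abs_mul (2 * (α - (N : ℝ) + (i : ℝ))) (Csym α N i),
        abs_mul (((N - 2 * (i - 1) : ℕ) : ℝ)) (if i = 0 then 0 else Csym α N (i - 1)),
        abs_of_nonneg (show (0:ℝ) ≤ ((N - 2 * (i - 1) : ℕ) : ℝ) from Nat.cast_nonneg _)]
    have sumA : ∑ i ∈ Finset.range (N + 2), |2 * (α - (N : ℝ) + (i : ℝ))| * |Csym α N i|
        ≤ (J + 3 * N + 2) * S := by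
      rw [Finset.sum_range_succ, hzero]
      simp only [abs_zero, mul_zero, add_zero]
      rw [hS, Finset.mul_sum]
      apply Finset.sum_le_sum
      intro i hi
      exact mul_le_mul_of_nonneg_right
        (habs i (Nat.lt_succ_iff.mp (Finset.mem_range.mp hi))) (abs_nonneg _)
    have sumB : ∑ i ∈ Finset.range (N + 2),
        ((N - 2 * (i - 1) : ℕ) : ℝ) * |if i = 0 then 0 else Csym α N (i - 1)|
        ≤ (N : ℝ) * S := by
      rw [Finset.sum_range_succ']
      have hite : ∀ x : ℕ, (if x + 1 = 0 then (0:ℝ) else Csym α N x) = Csym α N x :=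
        fun x => if_neg (Nat.succ_ne_zero x)
      simp only [hite, if_pos rfl, ite_true, if_true, abs_zero, mul_zero, add_zero,
        Nat.add_sub_cancel]
      rw [hS, Finset.mul_sum]
      apply Finset.sum_le_sum
      intro i hi
      apply mul_le_mul_of_nonneg_right _ (abs_nonneg _)
      exact_mod_cast Nat.cast_le.mpr (Nat.sub_le N (2 * i))
    calc ∑ i ∈ Finset.range (N + 2), |Csym α (N + 1) i|
        ≤ (J + 3 * N + 2) * S + (N : ℝ) * S := le_trans step1 (add_le_add sumA sumB)
      _ = (J + 4 * N + 2) * S := by ring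
      _ ≤ (J + 4 * N + 2) * (8 ^ N * wp (2 * α) N * N.factorial) := by
          apply mul_le_mul_of_nonneg_left ih
          have : (0:ℝ) ≤ (N : ℝ) := Nat.cast_nonneg N
          linarith
      _ ≤ 8 ^ (N + 1) * wp (2 * α) (N + 1) * (N + 1).factorial := by
          rw [wp_succ, Nat.factorial_succ]
          have hJeq : jap (2 * α - ((N : ℕ) + 1 : ℕ) - 1) = J := by
            rw [hJdef]; congr 1; push_cast; ring
          rw [hJeq]
          have hw := wp_nonneg (2 * α) N
          have hf : (0:ℝ) ≤ (N.factorial : ℝ) := Nat.cast_nonneg _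
          have h8 : (0:ℝ) < 8 ^ N := by positivity
          have hcoef : J + 4 * N + 2 ≤ 8 * J * (N + 1) := by
            have hN0 : (0:ℝ) ≤ (N : ℝ) := Nat.cast_nonneg N
            nlinarith
          have hprod : (0:ℝ) ≤ 8 ^ N * wp (2 * α) N * N.factorial := by positivity
          calc (J + 4 * N + 2) * (8 ^ N * wp (2 * α) N * N.factorial)
              ≤ (8 * J * (N + 1)) * (8 ^ N * wp (2 * α) N * N.factorial) :=
                mul_le_mul_of_nonneg_right hcoef hprod
            _ = 8 ^ (N + 1) * (wp (2 * α) N * J) * ((N + 1 : ℕ) * N.factorial : ℕ) := by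
                push_cast; ring

/-- derivative bounds for the symbol `⟨k,ξ⟩^{m/2}`. -/
theorem symbol_derivative_bounds :
    ∃ C0 : ℝ, 1 < C0 ∧
      ∀ (N m : ℕ), 1 ≤ N → 1 ≤ m → ∀ (k : ℤ), k ≠ 0 → ∀ ξ : ℝ,
        |iteratedDeriv N (fun x : ℝ => jap2 (k : ℝ) x ^ ((m : ℝ) / 2)) ξ|
          ≤ C0 ^ N * jap2 (k : ℝ) ξ ^ ((m : ℝ) / 2 - N) * wp ((m : ℝ) / 2) N
              * (N.factorial : ℝ) := by
  refine ⟨8, by norm_num, ?_⟩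
  intro N m hN hm k hk ξ
  set c : ℝ := 1 + (k : ℝ) ^ 2 with hcdef
  set α : ℝ := (m : ℝ) / 4 with hαdef
  have hc : (1 : ℝ) ≤ c := by nlinarith [sq_nonneg (k : ℝ)]
  have hfun : (fun x : ℝ => jap2 (k : ℝ) x ^ ((m : ℝ) / 2))
      = fun x : ℝ => (c + x ^ 2) ^ α := by
    funext x
    have hb : (0:ℝ) ≤ 1 + (k : ℝ) ^ 2 + x ^ 2 := by positivity
    rw [jap2, Real.sqrt_eq_rpow, ← Real.rpow_mul hb]
    rw [hcdef, hαdef]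
    congr 1 <;> ring
  rw [hfun, Csym_formula α c hc N]
  set J := jap2 (k : ℝ) ξ with hJdef
  have hJpos : (0 : ℝ) < J := by
    rw [hJdef, jap2]
    apply Real.sqrt_pos.mpr
    nlinarith [sq_nonneg (k : ℝ), sq_nonneg ξ]
  have hs2 : c + ξ ^ 2 = J ^ (2 : ℕ) := by
    rw [hJdef, jap2, Real.sq_sqrt (by positivity : (0:ℝ) ≤ 1 + (k:ℝ) ^ 2 + ξ ^ 2)]
  have habsξ : |ξ| ≤ J := by
    rw [hJdef, jap2, ← Real.sqrt_sq_eq_abs]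
    exact Real.sqrt_le_sqrt (by nlinarith [sq_nonneg (k : ℝ)])
  have hterm : ∀ i ∈ Finset.range (N + 1),
      |Csym α N i * (ξ ^ (N - 2 * i) * (c + ξ ^ 2) ^ (α - (N : ℝ) + (i : ℝ)))|
        ≤ |Csym α N i| * J ^ ((m : ℝ) / 2 - N) := by
    intro i _
    rcases eq_or_ne (Csym α N i) 0 with h0 | h0
    · simp [h0]
    · have h2i : 2 * i ≤ N := Csym_support α N i h0
      have hspos : (0:ℝ) < c + ξ ^ 2 := by nlinarith [sq_nonneg ξ]
      rw [abs_mul]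
      apply mul_le_mul_of_nonneg_left _ (abs_nonneg _)
      rw [abs_mul, abs_pow, abs_of_pos (Real.rpow_pos_of_pos hspos _)]
      have h1 : |ξ| ^ (N - 2 * i) ≤ J ^ (N - 2 * i) :=
        pow_le_pow_left₀ (abs_nonneg ξ) habsξ _
      have h2 : (J : ℝ) ^ (N - 2 * i) = J ^ (((N - 2 * i : ℕ) : ℝ)) :=
        (Real.rpow_natCast J (N - 2 * i)).symm
      have h3 : (c + ξ ^ 2) ^ (α - (N : ℝ) + (i : ℝ))
          = J ^ (2 * (α - (N : ℝ) + (i : ℝ))) := by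
        rw [hs2, ← Real.rpow_natCast J 2, ← Real.rpow_mul hJpos.le]
        norm_num
      calc |ξ| ^ (N - 2 * i) * (c + ξ ^ 2) ^ (α - (N : ℝ) + (i : ℝ))
          ≤ J ^ (N - 2 * i) * (c + ξ ^ 2) ^ (α - (N : ℝ) + (i : ℝ)) :=
            mul_le_mul_of_nonneg_right h1 (Real.rpow_pos_of_pos hspos _).le
        _ = J ^ (((N - 2 * i : ℕ) : ℝ)) * J ^ (2 * (α - (N : ℝ) + (i : ℝ))) := by
            rw [← h2, ← h3]
        _ = J ^ ((((N - 2 * i : ℕ) : ℝ)) + 2 * (α - (N : ℝ) + (i : ℝ))) :=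
            (Real.rpow_add hJpos _ _).symm
        _ = J ^ ((m : ℝ) / 2 - N) := by
            congr 1
            rw [Nat.cast_sub h2i, hαdef]
            push_cast
            ring
  calc |∑ i ∈ Finset.range (N + 1),
        Csym α N i * (ξ ^ (N - 2 * i) * (c + ξ ^ 2) ^ (α - (N : ℝ) + (i : ℝ)))|
      ≤ ∑ i ∈ Finset.range (N + 1),
          |Csym α N i * (ξ ^ (N - 2 * i) * (c + ξ ^ 2) ^ (α - (N : ℝ) + (i : ℝ)))| :=
        Finset.abs_sum_le_sum_abs _ _
    _ ≤ ∑ i ∈ Finset.range (N + 1), |Csym α N i| * J ^ ((m : ℝ) / 2 - N) :=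
        Finset.sum_le_sum hterm
    _ = (∑ i ∈ Finset.range (N + 1), |Csym α N i|) * J ^ ((m : ℝ) / 2 - N) := by
        rw [← Finset.sum_mul]
    _ ≤ (8 ^ N * wp (2 * α) N * N.factorial) * J ^ ((m : ℝ) / 2 - N) :=
        mul_le_mul_of_nonneg_right (Csym_bound α N) (Real.rpow_nonneg hJpos.le _)
    _ = 8 ^ N * J ^ ((m : ℝ) / 2 - N) * wp ((m : ℝ) / 2) N * (N.factorial : ℝ) := by
        rw [show 2 * α = (m : ℝ) / 2 by rw [hαdef]; ring]
        ring
end
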